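/- Let S = {s_1,...,s_n} be a multiset of positive integers with total sum B, and let Δ ≥ B. Define (2n+2)×(2n+2) matrices T and C by: T[i,j] = s_j if i ∈ {1,2} and j ∈ [1,n], and 0 otherwise; C[1,j] = 1 for j ∈ [3,n+2], C[2,j] = 1 for j ∈ [n+3,2n+2], C[1,2] = C[2,1] = Δ, and C[i,j] = 0 otherwise. Then the minimum over permutations π of [2n+2] of max_i max{send_i(π), rcv_i(π)} equals B/2 if and only if S admits a partition into two subsets of equal sum B/2, where send_i(π) = ∑_j T[i,j]·C[i,π(j)] and rcv_i(π) = ∑_j T[j,π⁻¹(i)]·C[j,i]. -/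

import Mathlib

open Finset

set_option maxHeartbeats 1000000

/-- Transmission matrix of the PARTITION-to-DRP-MSR reduction (0-indexed):
machines `1,2` of the paper are indices `0,1`; data columns `[1,n]` are indices `< n`. -/
def redT (n : ℕ) (s : Fin n → ℕ) : Matrix (Fin (2*n+2)) (Fin (2*n+2)) ℝ :=
  fun i j => if h : (i.val = 0 ∨ i.val = 1) ∧ j.val < n then (s ⟨j.val, h.2⟩ : ℝ) else 0

/-- Communication cost matrix of the PARTITION-to-DRP-MSR reduction (0-indexed):
`C[1,j]=1` for `j∈[3,n+2]` becomes row `0`, columns `[2,n+1]`, etc. -/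
def redC (n : ℕ) (Δ : ℕ) : Matrix (Fin (2*n+2)) (Fin (2*n+2)) ℝ :=
  fun i j =>
    if i.val = 0 ∧ 2 ≤ j.val ∧ j.val ≤ n+1 then 1
    else if i.val = 1 ∧ n+2 ≤ j.val then 1
    else if (i.val = 0 ∧ j.val = 1) ∨ (i.val = 1 ∧ j.val = 0) then (Δ : ℝ)
    else 0

/-- Send cost of machine `i` under permutation `π`. -/
def sendCost {m : ℕ} (T C : Matrix (Fin m) (Fin m) ℝ) (π : Equiv.Perm (Fin m)) (i : Fin m) : ℝ :=
  ∑ j, T i j * C i (π j)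

/-- Receive cost of machine `i` under permutation `π`. -/
def rcvCost {m : ℕ} (T C : Matrix (Fin m) (Fin m) ℝ) (π : Equiv.Perm (Fin m)) (i : Fin m) : ℝ :=
  ∑ j, T j (π⁻¹ i) * C j i

/-- MSR cost: maximum over machines of max of send and receive cost. -/
def msrCost (n : ℕ) (T C : Matrix (Fin (2*n+2)) (Fin (2*n+2)) ℝ)
    (π : Equiv.Perm (Fin (2*n+2))) : ℝ :=
  Finset.univ.sup' ⟨(⟨0, by omega⟩ : Fin (2*n+2)), Finset.mem_univ _⟩
    (fun i => max (sendCost T C π i) (rcvCost T C π i))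

/-! ### Auxiliary lemmas -/

lemma exists_perm_comp {α β : Type*} [Fintype β] (f₁ f₂ : α ↪ β) :
    ∃ π : Equiv.Perm β, ∀ a, π (f₁ a) = f₂ a := by
  classical
  set e1 := Equiv.ofInjective f₁ f₁.injective with he1
  set e2 := Equiv.ofInjective f₂ f₂.injective with he2
  have hcard : Fintype.card ((Set.range f₁)ᶜ : Set β) =
      Fintype.card ((Set.range f₂)ᶜ : Set β) := by
    have h1 : Fintype.card (Set.range f₁) = Fintype.card (Set.range f₂) :=
      Fintype.card_congr (e1.symm.trans e2)
    rw [Fintype.card_compl_set, Fintype.card_compl_set, h1]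
  obtain ⟨ec⟩ := Fintype.card_eq.mp hcard
  refine ⟨(Equiv.Set.sumCompl (Set.range f₁)).symm.trans
      (((e1.symm.trans e2).sumCongr ec).trans (Equiv.Set.sumCompl (Set.range f₂))), ?_⟩
  intro a
  have hmem : f₁ a ∈ Set.range f₁ := ⟨a, rfl⟩
  simp only [Equiv.trans_apply]
  rw [Equiv.Set.sumCompl_symm_apply_of_mem hmem]
  have h1 : e1.symm ⟨f₁ a, hmem⟩ = a := by
    rw [Equiv.symm_apply_eq]
    exact Subtype.ext rfl
  simp [h1, Equiv.Set.sumCompl_apply_inl, he2, Equiv.ofInjective_apply]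

lemma sum_restrict {m n : ℕ} (h : n ≤ m) (F : Fin m → ℝ)
    (hF : ∀ j : Fin m, n ≤ j.val → F j = 0) :
    ∑ j, F j = ∑ i : Fin n, F ⟨i.val, lt_of_lt_of_le i.isLt h⟩ := by
  classical
  set f : ℕ → ℝ := fun x => if hx : x < m then F ⟨x, hx⟩ else 0 with hf
  have h1 : ∑ j, F j = ∑ x ∈ range m, f x := by
    rw [← Fin.sum_univ_eq_sum_range]
    exact Finset.sum_congr rfl fun j _ => by simp [hf]
  have h2 : ∑ i : Fin n, F ⟨i.val, lt_of_lt_of_le i.isLt h⟩ = ∑ x ∈ range n, f x := by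
    rw [← Fin.sum_univ_eq_sum_range]
    exact Finset.sum_congr rfl fun i _ => by
      show _ = dite _ _ _
      rw [dif_pos (lt_of_lt_of_le i.isLt h)]
  rw [h1, h2]
  refine (Finset.sum_subset (Finset.range_subset_range.mpr h) fun x hx hx' => ?_).symm
  simp only [mem_range] at hx hx'
  show dite _ _ _ = (0:ℝ)
  rw [dif_pos hx]
  exact hF _ (by simpa using hx')

def emb (n : ℕ) (i : Fin n) : Fin (2*n+2) := ⟨i.val, by omega⟩

lemma redC_nonneg (n Δ : ℕ) (i j : Fin (2*n+2)) : 0 ≤ redC n Δ i j := by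
  unfold redC; split_ifs <;> positivity

lemma redC0 (n Δ : ℕ) (r x : Fin (2*n+2)) (hr : r.val = 0) :
    redC n Δ r x = if 2 ≤ x.val ∧ x.val ≤ n+1 then 1
      else if x.val = 1 then (Δ:ℝ) else 0 := by
  unfold redC
  simp only [hr]
  split_ifs <;> first | rfl | (exfalso; simp_all) | (exfalso; simp_all; omega)

lemma redC1 (n Δ : ℕ) (r x : Fin (2*n+2)) (hr : r.val = 1) :
    redC n Δ r x = if n+2 ≤ x.val then 1
      else if x.val = 0 then (Δ:ℝ) else 0 := by
  unfold redC
  simp only [hr]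
  split_ifs <;> first | rfl | (exfalso; simp_all) | (exfalso; simp_all; omega)

lemma send_eq (n : ℕ) (s : Fin n → ℕ) (Δ : ℕ) (π : Equiv.Perm (Fin (2*n+2)))
    (r : Fin (2*n+2)) (hr : r.val = 0 ∨ r.val = 1) :
    sendCost (redT n s) (redC n Δ) π r
      = ∑ i : Fin n, (s i : ℝ) * redC n Δ r (π (emb n i)) := by
  unfold sendCost
  rw [sum_restrict (n := n) (by omega) _ (fun j hj => by
    unfold redT; rw [dif_neg fun h => absurd h.2 (by omega)]; ring)]
  refine Finset.sum_congr rfl fun i _ => ?_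
  have : redT n s r ⟨i.val, by omega⟩ = (s i : ℝ) := by
    unfold redT; rw [dif_pos ⟨hr, i.isLt⟩]
  rw [this]; rfl

lemma send_zero (n : ℕ) (s : Fin n → ℕ) (Δ : ℕ) (π : Equiv.Perm (Fin (2*n+2)))
    (r : Fin (2*n+2)) (hr : 2 ≤ r.val) :
    sendCost (redT n s) (redC n Δ) π r = 0 := by
  unfold sendCost
  refine Finset.sum_eq_zero fun j _ => ?_
  unfold redT; rw [dif_neg (by omega)]; ring

lemma rcv_eq (n : ℕ) (s : Fin n → ℕ) (Δ : ℕ) (π : Equiv.Perm (Fin (2*n+2))) (i : Fin (2*n+2)) :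
    rcvCost (redT n s) (redC n Δ) π i
      = redT n s ⟨0, by omega⟩ (π⁻¹ i) * redC n Δ ⟨0, by omega⟩ i
        + redT n s ⟨1, by omega⟩ (π⁻¹ i) * redC n Δ ⟨1, by omega⟩ i := by
  classical
  unfold rcvCost
  have key := Finset.sum_subset
    (Finset.subset_univ ({⟨0, by omega⟩, ⟨1, by omega⟩} : Finset (Fin (2*n+2))))
    (f := fun j => redT n s j (π⁻¹ i) * redC n Δ j i) ?_
  · rw [← key, Finset.sum_pair (by simp [Fin.ext_iff])]
  intro j _ hj
  simp only [mem_insert, mem_singleton] at hj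
  push_neg at hj
  have h0 : j.val ≠ 0 := fun h => hj.1 (Fin.ext h)
  have h1 : j.val ≠ 1 := fun h => hj.2 (Fin.ext h)
  show redT n s j (π⁻¹ i) * redC n Δ j i = 0
  unfold redT; rw [dif_neg fun h => h.1.elim h0 h1]; ring

theorem stmt_2 (n : ℕ) (hn : 0 < n) (s : Fin n → ℕ) (hs : ∀ i, 0 < s i)
    (Δ : ℕ) (hΔ : ∑ i, s i ≤ Δ) :
    ((Finset.univ : Finset (Equiv.Perm (Fin (2*n+2)))).inf'
        ⟨Equiv.refl _, Finset.mem_univ _⟩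
        (fun π => msrCost n (redT n s) (redC n Δ) π) = (∑ i, s i : ℝ) / 2) ↔
      ∃ A : Finset (Fin n), 2 * ∑ i ∈ A, s i = ∑ i, s i := by
  classical
  set i0 : Fin (2*n+2) := ⟨0, by omega⟩ with hi0
  set i1 : Fin (2*n+2) := ⟨1, by omega⟩ with hi1
  set B : ℕ := ∑ i, s i with hBdef
  have hB1 : 1 ≤ B :=
    le_trans (hs ⟨0, hn⟩) (Finset.single_le_sum (f := s) (fun i _ => Nat.zero_le _) (mem_univ _))
  have hΔ1 : (1:ℝ) ≤ (Δ:ℝ) := by exact_mod_cast le_trans hB1 hΔ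
  have hΔB : (B:ℝ) ≤ (Δ:ℝ) := by exact_mod_cast hΔ
  have hBR : (0:ℝ) < B := by exact_mod_cast hB1
  have hBcast : (∑ i : Fin n, (s i : ℝ)) = (B:ℝ) := by rw [hBdef]; push_cast; rfl
  -- the sum of the two cost rows is at least 1, and exactly 1 away from columns 0,1
  have hc1 : ∀ x : Fin (2*n+2), (1:ℝ) ≤ redC n Δ i0 x + redC n Δ i1 x := by
    intro x
    rw [redC0 n Δ i0 x rfl, redC1 n Δ i1 x rfl]
    have hx := x.isLt
    split_ifs <;> first | linarith | omega
  have hcsum1 : ∀ x : Fin (2*n+2), 2 ≤ x.val → redC n Δ i0 x + redC n Δ i1 x = 1 := by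
    intro x hx2
    rw [redC0 n Δ i0 x rfl, redC1 n Δ i1 x rfl]
    have hx := x.isLt
    split_ifs <;> first | linarith | omega
  -- lower bound on MSR for every permutation
  have lower : ∀ π : Equiv.Perm (Fin (2*n+2)),
      (B:ℝ)/2 ≤ msrCost n (redT n s) (redC n Δ) π := by
    intro π
    have hs0 := send_eq n s Δ π i0 (Or.inl rfl)
    have hs1 := send_eq n s Δ π i1 (Or.inr rfl)
    have hsum : (B:ℝ) ≤ sendCost (redT n s) (redC n Δ) π i0
        + sendCost (redT n s) (redC n Δ) π i1 := by
      rw [hs0, hs1, ← Finset.sum_add_distrib, ← hBcast]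
      refine Finset.sum_le_sum fun i _ => ?_
      have h1 := hc1 (π (emb n i))
      have h2 : (0:ℝ) ≤ (s i : ℝ) := by positivity
      nlinarith
    have hle0 : sendCost (redT n s) (redC n Δ) π i0 ≤ msrCost n (redT n s) (redC n Δ) π := by
      unfold msrCost
      exact le_trans (le_max_left _ _) (Finset.le_sup'
        (fun i => max (sendCost (redT n s) (redC n Δ) π i) (rcvCost (redT n s) (redC n Δ) π i))
        (mem_univ i0))
    have hle1 : sendCost (redT n s) (redC n Δ) π i1 ≤ msrCost n (redT n s) (redC n Δ) π := by
      unfold msrCost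
      exact le_trans (le_max_left _ _) (Finset.le_sup'
        (fun i => max (sendCost (redT n s) (redC n Δ) π i) (rcvCost (redT n s) (redC n Δ) π i))
        (mem_univ i1))
    linarith
  rw [hBcast]
  constructor
  · -- minimum equals B/2 → partition exists
    intro hinf
    obtain ⟨π, -, hπ⟩ := Finset.exists_mem_eq_inf'
      (⟨Equiv.refl _, Finset.mem_univ _⟩ :
        (Finset.univ : Finset (Equiv.Perm (Fin (2*n+2)))).Nonempty)
      (fun π => msrCost n (redT n s) (redC n Δ) π)
    have hmsr : msrCost n (redT n s) (redC n Δ) π = (B:ℝ)/2 := by rw [← hπ, hinf]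
    have hbound : ∀ r : Fin (2*n+2),
        max (sendCost (redT n s) (redC n Δ) π r) (rcvCost (redT n s) (redC n Δ) π r)
          ≤ (B:ℝ)/2 := by
      intro r
      rw [← hmsr]
      unfold msrCost
      exact Finset.le_sup'
        (fun i => max (sendCost (redT n s) (redC n Δ) π i) (rcvCost (redT n s) (redC n Δ) π i))
        (mem_univ r)
    have h0le : sendCost (redT n s) (redC n Δ) π i0 ≤ (B:ℝ)/2 :=
      le_trans (le_max_left _ _) (hbound i0)
    have h1le : sendCost (redT n s) (redC n Δ) π i1 ≤ (B:ℝ)/2 :=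
      le_trans (le_max_left _ _) (hbound i1)
    have hs0 := send_eq n s Δ π i0 (Or.inl rfl)
    have hs1 := send_eq n s Δ π i1 (Or.inr rfl)
    -- no data element is sent to columns 0 or 1
    have hge2 : ∀ i : Fin n, 2 ≤ (π (emb n i)).val := by
      intro i
      by_contra hlt
      push_neg at hlt
      have hterm_le : ∀ (r : Fin (2*n+2)),
          (s i : ℝ) * redC n Δ r (π (emb n i))
            ≤ ∑ j : Fin n, (s j : ℝ) * redC n Δ r (π (emb n j)) := fun r =>
        Finset.single_le_sum
          (f := fun j : Fin n => (s j : ℝ) * redC n Δ r (π (emb n j)))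
          (fun j _ => mul_nonneg (by positivity) (redC_nonneg _ _ _ _)) (mem_univ i)
      have hsi : (1:ℝ) ≤ (s i : ℝ) := by exact_mod_cast hs i
      interval_cases h : (π (emb n i)).val
      · -- column 0 : Δ appears in row 1
        have hcv : redC n Δ i1 (π (emb n i)) = (Δ:ℝ) := by
          rw [redC1 n Δ i1 _ rfl, if_neg (by omega), if_pos h]
        have := hterm_le i1
        rw [hcv, ← hs1] at this
        nlinarith
      · -- column 1 : Δ appears in row 0
        have hcv : redC n Δ i0 (π (emb n i)) = (Δ:ℝ) := by
          rw [redC0 n Δ i0 _ rfl, if_neg (by omega), if_pos h]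
        have := hterm_le i0
        rw [hcv, ← hs0] at this
        nlinarith
    -- the partition
    set A : Finset (Fin n) := univ.filter (fun i => (π (emb n i)).val ≤ n+1) with hAdef
    refine ⟨A, ?_⟩
    have hsend0 : sendCost (redT n s) (redC n Δ) π i0 = ∑ i ∈ A, (s i : ℝ) := by
      rw [hs0, hAdef, Finset.sum_filter]
      refine Finset.sum_congr rfl fun i _ => ?_
      rw [redC0 n Δ i0 _ rfl]
      by_cases hiA : (π (emb n i)).val ≤ n+1
      · rw [if_pos ⟨hge2 i, hiA⟩, if_pos hiA]; ring
      · rw [if_neg (fun h => hiA h.2), if_neg (by have := hge2 i; omega), if_neg hiA]; ring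
    have hsends : sendCost (redT n s) (redC n Δ) π i0
        + sendCost (redT n s) (redC n Δ) π i1 = (B:ℝ) := by
      rw [hs0, hs1, ← Finset.sum_add_distrib, ← hBcast]
      refine Finset.sum_congr rfl fun i _ => ?_
      have := hcsum1 (π (emb n i)) (hge2 i)
      linear_combination (↑(s i) : ℝ) * this
    have hAval : (∑ i ∈ A, (s i : ℝ)) = (B:ℝ)/2 := by
      linarith [hsends, h0le, h1le, hsend0]
    have : ((2 * ∑ i ∈ A, s i : ℕ) : ℝ) = (B:ℝ) := by push_cast; linarith
    exact_mod_cast this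
  · -- partition exists → minimum equals B/2
    rintro ⟨A, hA⟩
    have hsA : ∑ i ∈ A, s i + ∑ i ∈ Aᶜ, s i = B := by
      rw [hBdef]; exact Finset.sum_add_sum_compl A s
    have hsle : ∀ i : Fin n, 2 * s i ≤ B := by
      intro i
      by_cases hiA : i ∈ A
      · have := Finset.single_le_sum (f := s) (fun j _ => Nat.zero_le _) hiA; omega
      · have := Finset.single_le_sum (f := s) (fun j _ => Nat.zero_le _)
          (Finset.mem_compl.mpr hiA); omega
    have hcardA : A.card ≤ n := by simpa using A.card_le_univ
    have hcardAc : Aᶜ.card = n - A.card := by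
      simp [Finset.card_compl]
    -- the target assignment of data elements to columns
    set g : Fin n → Fin (2*n+2) := fun i =>
      if hi : i ∈ A then
        ⟨((A.orderIsoOfFin rfl).symm ⟨i, hi⟩).val + 2, by
          have := ((A.orderIsoOfFin rfl).symm ⟨i, hi⟩).isLt; omega⟩
      else
        ⟨((Aᶜ.orderIsoOfFin rfl).symm ⟨i, Finset.mem_compl.mpr hi⟩).val + (n+2), by
          have := ((Aᶜ.orderIsoOfFin rfl).symm ⟨i, Finset.mem_compl.mpr hi⟩).isLt; omega⟩
      with hgdef
    have hgA : ∀ i (hi : i ∈ A), (g i).val = ((A.orderIsoOfFin rfl).symm ⟨i, hi⟩).val + 2 := by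
      intro i hi
      rw [hgdef]; dsimp only; rw [dif_pos hi]
    have hgB : ∀ i (hi : i ∉ A),
        (g i).val = ((Aᶜ.orderIsoOfFin rfl).symm ⟨i, Finset.mem_compl.mpr hi⟩).val + (n+2) := by
      intro i hi
      rw [hgdef]; dsimp only; rw [dif_neg hi]
    have hgA2 : ∀ i (hi : i ∈ A), 2 ≤ (g i).val ∧ (g i).val ≤ n+1 := by
      intro i hi
      rw [hgA i hi]
      have h1 := ((A.orderIsoOfFin rfl).symm ⟨i, hi⟩).isLt
      omega
    have hgB2 : ∀ i (hi : i ∉ A), n+2 ≤ (g i).val := by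
      intro i hi
      rw [hgB i hi]; omega
    have hg2 : ∀ i, 2 ≤ (g i).val := by
      intro i
      by_cases hi : i ∈ A
      · exact (hgA2 i hi).1
      · have := hgB2 i hi; omega
    have ginj : Function.Injective g := by
      intro a b hab
      have hval := congrArg Fin.val hab
      by_cases ha : a ∈ A <;> by_cases hb : b ∈ A
      · rw [hgA a ha, hgA b hb] at hval
        have h2 : ((A.orderIsoOfFin rfl).symm ⟨a, ha⟩ : Fin A.card)
            = (A.orderIsoOfFin rfl).symm ⟨b, hb⟩ := Fin.ext (by omega)
        have h3 := (A.orderIsoOfFin rfl).symm.injective h2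
        exact congrArg Subtype.val h3
      · rw [hgA a ha, hgB b hb] at hval
        have h1 := ((A.orderIsoOfFin rfl).symm ⟨a, ha⟩).isLt
        omega
      · rw [hgB a ha, hgA b hb] at hval
        have h1 := ((A.orderIsoOfFin rfl).symm ⟨b, hb⟩).isLt
        omega
      · rw [hgB a ha, hgB b hb] at hval
        have h2 : ((Aᶜ.orderIsoOfFin rfl).symm ⟨a, Finset.mem_compl.mpr ha⟩ : Fin Aᶜ.card)
            = (Aᶜ.orderIsoOfFin rfl).symm ⟨b, Finset.mem_compl.mpr hb⟩ := Fin.ext (by omega)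
        have h3 := (Aᶜ.orderIsoOfFin rfl).symm.injective h2
        exact congrArg Subtype.val h3
    have embinj : Function.Injective (emb n) := by
      intro a b hab
      rw [Fin.ext_iff]
      simpa [emb, Fin.ext_iff] using hab
    obtain ⟨π, hπ⟩ := exists_perm_comp ⟨emb n, embinj⟩ ⟨g, ginj⟩
    simp only [Function.Embedding.coeFn_mk] at hπ
    -- value of the two partition sums
    have hA2 : (∑ i ∈ A, (s i : ℝ)) = (B:ℝ)/2 := by
      have : ((2 * ∑ i ∈ A, s i : ℕ) : ℝ) = ((B:ℕ) : ℝ) := Nat.cast_inj.mpr hA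
      push_cast at this
      linarith
    have hAc2 : (∑ i ∈ Aᶜ, (s i : ℝ)) = (B:ℝ)/2 := by
      have : ((∑ i ∈ A, s i + ∑ i ∈ Aᶜ, s i : ℕ) : ℝ) = ((B:ℕ):ℝ) := Nat.cast_inj.mpr hsA
      push_cast at this
      linarith [hA2]
    have hsend0 : sendCost (redT n s) (redC n Δ) π i0 = (B:ℝ)/2 := by
      have hrepr : (∑ i ∈ A, (s i:ℝ)) = ∑ i : Fin n, if i ∈ A then (s i:ℝ) else 0 := by
        rw [Finset.sum_ite_mem, Finset.univ_inter]
      rw [send_eq n s Δ π i0 (Or.inl rfl), ← hA2, hrepr]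
      refine Finset.sum_congr rfl fun i _ => ?_
      rw [hπ i, redC0 n Δ i0 _ rfl]
      by_cases hiA : i ∈ A
      · rw [if_pos (hgA2 i hiA), if_pos hiA]; ring
      · have hB2 := hgB2 i hiA
        rw [if_neg (by omega), if_neg (by omega), if_neg hiA]; ring
    have hsend1 : sendCost (redT n s) (redC n Δ) π i1 = (B:ℝ)/2 := by
      have hrepr : (∑ i ∈ Aᶜ, (s i:ℝ)) = ∑ i : Fin n, if i ∈ Aᶜ then (s i:ℝ) else 0 := by
        rw [Finset.sum_ite_mem, Finset.univ_inter]
      rw [send_eq n s Δ π i1 (Or.inr rfl), ← hAc2, hrepr]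
      refine Finset.sum_congr rfl fun i _ => ?_
      rw [hπ i, redC1 n Δ i1 _ rfl]
      by_cases hiA : i ∈ A
      · have hA2' := hgA2 i hiA
        rw [if_neg (by omega), if_neg (by omega), if_neg (by simpa using hiA)]; ring
      · have hB2 := hgB2 i hiA
        rw [if_pos hB2, if_pos (by simpa using hiA)]; ring
    have hrcv : ∀ r, rcvCost (redT n s) (redC n Δ) π r ≤ (B:ℝ)/2 := by
      intro r
      rw [rcv_eq]
      show redT n s i0 (π⁻¹ r) * redC n Δ i0 r
          + redT n s i1 (π⁻¹ r) * redC n Δ i1 r ≤ (B:ℝ)/2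
      by_cases hx : (π⁻¹ r).val < n
      · set x : Fin n := ⟨(π⁻¹ r).val, hx⟩ with hxdef
        have hembx : emb n x = π⁻¹ r := Fin.ext rfl
        have hrg : r = g x := by
          conv_lhs => rw [← show π (π⁻¹ r) = r from π.apply_symm_apply r]
          rw [← hembx, hπ x]
        have hr2 : 2 ≤ r.val := by rw [hrg]; exact hg2 x
        have hT0 : redT n s i0 (π⁻¹ r) = (s x : ℝ) := by
          unfold redT; rw [dif_pos ⟨Or.inl rfl, hx⟩]
        have hT1 : redT n s i1 (π⁻¹ r) = (s x : ℝ) := by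
          unfold redT; rw [dif_pos ⟨Or.inr rfl, hx⟩]
        rw [hT0, hT1]
        have hsum := hcsum1 r hr2
        have hsx : (s x : ℝ) ≤ (B:ℝ)/2 := by
          have h1 : ((2 * s x : ℕ):ℝ) ≤ ((B:ℕ):ℝ) := Nat.cast_le.mpr (hsle x)
          push_cast at h1; linarith
        calc (s x:ℝ) * redC n Δ i0 r + (s x:ℝ) * redC n Δ i1 r
            = (s x:ℝ) * (redC n Δ i0 r + redC n Δ i1 r) := by ring
          _ = (s x:ℝ) := by rw [hsum, mul_one]
          _ ≤ (B:ℝ)/2 := hsx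
      · have hT0 : redT n s i0 (π⁻¹ r) = 0 := by
          unfold redT; rw [dif_neg fun h => hx h.2]
        have hT1 : redT n s i1 (π⁻¹ r) = 0 := by
          unfold redT; rw [dif_neg fun h => hx h.2]
        rw [hT0, hT1]
        simp only [zero_mul, add_zero]
        linarith
    have hmsr : msrCost n (redT n s) (redC n Δ) π = (B:ℝ)/2 := by
      unfold msrCost
      apply le_antisymm
      · refine Finset.sup'_le _ _ fun r _ => max_le ?_ (hrcv r)
        by_cases hr0 : r.val = 0
        · rw [show r = i0 from Fin.ext hr0, hsend0]
        · by_cases hr1 : r.val = 1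
          · rw [show r = i1 from Fin.ext hr1, hsend1]
          · rw [send_zero n s Δ π r (by omega)]; linarith
      · calc (B:ℝ)/2 = sendCost (redT n s) (redC n Δ) π i0 := hsend0.symm
          _ ≤ max (sendCost (redT n s) (redC n Δ) π i0)
              (rcvCost (redT n s) (redC n Δ) π i0) := le_max_left _ _
          _ ≤ _ := Finset.le_sup'
              (fun i => max (sendCost (redT n s) (redC n Δ) π i)
                (rcvCost (redT n s) (redC n Δ) π i)) (mem_univ i0)
    apply le_antisymm
    · exact le_trans (Finset.inf'_le _ (mem_univ π)) (le_of_eq hmsr)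
    · exact Finset.le_inf' _ _ fun π' _ => lower π'
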